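/- arXiv:2602.21056 — 2 statements merged into one kernel-verified Lean document; each statement's English description precedes it below -/
import Mathlib

section
/- Let N ≥ 2 and let A = (a_{jk}) and B = (b_{jk}) be positive definite N×N complex matrices. Then det((A ⋄ B)_{N−1}) ≥ ( a_{00} · det(B_{N−1})/det(B_{N−2}) + b_{00} · det(A_{N−1})/det(A_{N−2}) ) · det((A ⋄ B)_{N−2}), where ⋄ denotes the Jury product, M_n denotes the leading principal (n+1)×(n+1) submatrix of a matrix M, and (A ⋄ B)_{N−1} = A ⋄ B. -/
open Finset Matrix ComplexOrder

/-- The Jury product of two `N × N` complex matrices (indices `0, …, N-1`):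
`(A ⋄ B)_{jk} = ∑_{m=0}^{j} ∑_{n=0}^{k} a_{m,n} b_{j-m,k-n}`. -/
noncomputable def jury {N : ℕ} (A B : Matrix (Fin N) (Fin N) ℂ) :
    Matrix (Fin N) (Fin N) ℂ :=
  Matrix.of fun j k => ∑ m ∈ Finset.Iic j, ∑ n ∈ Finset.Iic k, A m n * B (j - m) (k - n)

/-- `leadDet A n` is the determinant of the leading principal `(n+1) × (n+1)`
submatrix `A_n = (a_{jk})_{j,k=0}^{n}` of `A` (junk value `0` if `n ≥ N`). -/
noncomputable def leadDet {N : ℕ} (A : Matrix (Fin N) (Fin N) ℂ) (n : ℕ) : ℂ :=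
  if h : n < N then
    (A.submatrix (Fin.castLE h) (Fin.castLE h) : Matrix (Fin (n + 1)) (Fin (n + 1)) ℂ).det
  else 0

/-! ### Auxiliary lemmas -/

section Aux

open scoped MatrixOrder in
lemma psd_exists_conjTranspose_mul_self {N : ℕ} {M : Matrix (Fin N) (Fin N) ℂ}
    (h : M.PosSemidef) : ∃ R : Matrix (Fin N) (Fin N) ℂ, M = Rᴴ * R :=
  CStarAlgebra.nonneg_iff_eq_star_mul_self.mp h.nonneg

lemma fin_sub_mem_Iic {N : ℕ} {j m : Fin N} (h : m ∈ Finset.Iic j) : j - m ∈ Finset.Iic j := by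
  simp only [Finset.mem_Iic] at *
  rw [Fin.le_def, Fin.coe_sub_iff_le.2 h]
  omega

lemma fin_sub_sub_cancel {N : ℕ} {j m : Fin N} (h : m ≤ j) : j - (j - m) = m := by
  have h2 : j - m ≤ j := by rw [Fin.le_def, Fin.coe_sub_iff_le.2 h]; omega
  apply Fin.ext
  rw [Fin.coe_sub_iff_le.2 h2, Fin.coe_sub_iff_le.2 h]
  rw [Fin.le_def] at h
  omega

lemma sum_Iic_reflect {N : ℕ} (j : Fin N) (g : Fin N → ℂ) :
    ∑ m ∈ Finset.Iic j, g m = ∑ m ∈ Finset.Iic j, g (j - m) := by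
  apply Finset.sum_nbij' (fun m => j - m) (fun m => j - m)
  · intro a ha; exact fin_sub_mem_Iic ha
  · intro a ha; exact fin_sub_mem_Iic ha
  · intro a ha; exact fin_sub_sub_cancel (Finset.mem_Iic.1 ha)
  · intro a ha; exact fin_sub_sub_cancel (Finset.mem_Iic.1 ha)
  · intro a ha; rw [fin_sub_sub_cancel (Finset.mem_Iic.1 ha)]

lemma jury_comm {N : ℕ} (A B : Matrix (Fin N) (Fin N) ℂ) : jury A B = jury B A := by
  ext j k
  show (∑ m ∈ Finset.Iic j, ∑ n ∈ Finset.Iic k, A m n * B (j - m) (k - n))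
    = ∑ m ∈ Finset.Iic j, ∑ n ∈ Finset.Iic k, B m n * A (j - m) (k - n)
  rw [sum_Iic_reflect j]
  refine Finset.sum_congr rfl fun m hm => ?_
  rw [sum_Iic_reflect k]
  refine Finset.sum_congr rfl fun n hn => ?_
  rw [fin_sub_sub_cancel (Finset.mem_Iic.1 hm), fin_sub_sub_cancel (Finset.mem_Iic.1 hn)]
  ring

lemma jury_add_left {N : ℕ} (A A' B : Matrix (Fin N) (Fin N) ℂ) :
    jury (A + A') B = jury A B + jury A' B := by
  ext j k
  show (∑ m ∈ Finset.Iic j, ∑ n ∈ Finset.Iic k, (A m n + A' m n) * B (j - m) (k - n)) = _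
  simp [add_mul, Finset.sum_add_distrib]
  rfl

lemma jury_add_right {N : ℕ} (A B B' : Matrix (Fin N) (Fin N) ℂ) :
    jury A (B + B') = jury A B + jury A B' := by
  rw [jury_comm, jury_add_left, jury_comm B A, jury_comm B' A]

lemma jury_single {n : ℕ} (c : ℂ) (M : Matrix (Fin (n+2)) (Fin (n+2)) ℂ) :
    jury (Matrix.single (Fin.last (n+1)) (Fin.last (n+1)) c) M
      = Matrix.single (Fin.last (n+1)) (Fin.last (n+1)) (c * M 0 0) := by
  ext j k
  show (∑ m ∈ Finset.Iic j, ∑ n' ∈ Finset.Iic k,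
      (if Fin.last (n+1) = m ∧ Fin.last (n+1) = n' then c else 0) * M (j - m) (k - n'))
    = if Fin.last (n+1) = j ∧ Fin.last (n+1) = k then c * M 0 0 else 0
  by_cases hj : j = Fin.last (n+1)
  · by_cases hk : k = Fin.last (n+1)
    · subst hj; subst hk
      rw [Finset.sum_eq_single (Fin.last (n+1))]
      · rw [Finset.sum_eq_single (Fin.last (n+1))]
        · simp [sub_self]
        · intro b _ hb; simp [hb.symm]
        · simp
      · intro b _ hb
        apply Finset.sum_eq_zero; intro n' _
        simp [hb.symm]
      · simp
    · have : ∀ n' ∈ Finset.Iic k, Fin.last (n+1) ≠ n' := by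
        intro n' hn' h
        exact hk (Fin.last_le_iff.1 (h ▸ Finset.mem_Iic.1 hn'))
      rw [if_neg (fun h => hk h.2.symm)]
      apply Finset.sum_eq_zero; intro m _
      apply Finset.sum_eq_zero; intro n' hn'
      simp [this n' hn']
  · have : ∀ m ∈ Finset.Iic j, Fin.last (n+1) ≠ m := by
      intro m hm h
      exact hj (Fin.last_le_iff.1 (h ▸ Finset.mem_Iic.1 hm))
    rw [if_neg (fun h => hj h.1.symm)]
    apply Finset.sum_eq_zero; intro m hm
    apply Finset.sum_eq_zero; intro n' _
    simp [this m hm]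

/-- The Jury product of positive semidefinite matrices is positive semidefinite. -/
lemma jury_posSemidef {N : ℕ} {A B : Matrix (Fin N) (Fin N) ℂ}
    (hA : A.PosSemidef) (hB : B.PosSemidef) : (jury A B).PosSemidef := by
  obtain ⟨P, hP⟩ := psd_exists_conjTranspose_mul_self hA
  obtain ⟨Q, hQ⟩ := psd_exists_conjTranspose_mul_self hB
  set Y : Matrix (Fin N × Fin N) (Fin N) ℂ :=
    Matrix.of (fun sr j => ∑ m ∈ Finset.Iic j, P sr.1 m * Q sr.2 (j - m)) with hY
  have : jury A B = Yᴴ * Y := by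
    ext j k
    show (∑ m ∈ Finset.Iic j, ∑ n ∈ Finset.Iic k, A m n * B (j - m) (k - n)) = _
    rw [Matrix.mul_apply]
    rw [← Finset.sum_product']
    simp only [hY, Matrix.conjTranspose_apply, Matrix.of_apply, star_sum, star_mul']
    subst hP hQ
    simp only [Matrix.mul_apply, Matrix.conjTranspose_apply]
    calc (∑ p ∈ Finset.Iic j ×ˢ Finset.Iic k,
            (∑ s : Fin N, star (P s p.1) * P s p.2) *
              ∑ r : Fin N, star (Q r (j - p.1)) * Q r (k - p.2))
        = ∑ p ∈ Finset.Iic j ×ˢ Finset.Iic k, ∑ q : Fin N × Fin N,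
            (star (P q.1 p.1) * P q.1 p.2) * (star (Q q.2 (j - p.1)) * Q q.2 (k - p.2)) := by
          refine Finset.sum_congr rfl fun p _ => ?_
          rw [Finset.sum_mul_sum, ← Finset.univ_product_univ, ← Finset.sum_product']
      _ = ∑ q : Fin N × Fin N, ∑ p ∈ Finset.Iic j ×ˢ Finset.Iic k,
            (star (P q.1 p.1) * P q.1 p.2) * (star (Q q.2 (j - p.1)) * Q q.2 (k - p.2)) :=
          Finset.sum_comm
      _ = ∑ q : Fin N × Fin N,
            (∑ m ∈ Finset.Iic j, star (P q.1 m) * star (Q q.2 (j - m))) *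
              ∑ n ∈ Finset.Iic k, P q.1 n * Q q.2 (k - n) := by
          refine Finset.sum_congr rfl fun q _ => ?_
          rw [Finset.sum_mul_sum, Finset.sum_product]
          simp only [Prod.fst, Prod.snd]
          refine Finset.sum_congr rfl fun m _ => Finset.sum_congr rfl fun n' _ => by ring
  rw [this]
  exact Matrix.posSemidef_conjTranspose_mul_self Y

lemma posSemidef_det_nonneg {N : ℕ} {M : Matrix (Fin N) (Fin N) ℂ}
    (h : M.PosSemidef) : 0 ≤ M.det := by
  obtain ⟨R, hR⟩ := psd_exists_conjTranspose_mul_self h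
  rw [hR, Matrix.det_mul, Matrix.det_conjTranspose]
  exact star_mul_self_nonneg _

lemma det_updateRow_single_last {n : ℕ} (M : Matrix (Fin (n+1)) (Fin (n+1)) ℂ) (c : ℂ) :
    (M.updateRow (Fin.last n) (Pi.single (Fin.last n) c)).det
      = c * (M.submatrix Fin.castSucc Fin.castSucc).det := by
  have hsub : ((M.updateRow (Fin.last n) (Pi.single (Fin.last n) c)).submatrix
      Fin.castSucc Fin.castSucc) = M.submatrix Fin.castSucc Fin.castSucc := by
    ext i j
    simp [Matrix.updateRow_apply, (Fin.castSucc_lt_last i).ne]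
  rw [Matrix.det_succ_row _ (Fin.last n)]
  rw [Finset.sum_eq_single (Fin.last n)]
  · simp [Fin.succAbove_last, hsub]
  · intro b _ hb
    simp [Matrix.updateRow_self, Pi.single_apply, hb.symm]
  · simp

lemma inv_last_last {n : ℕ} {A : Matrix (Fin (n+2)) (Fin (n+2)) ℂ} (hdet : A.det ≠ 0) :
    A⁻¹ (Fin.last (n+1)) (Fin.last (n+1))
      = (A.submatrix Fin.castSucc Fin.castSucc).det / A.det := by
  rw [Matrix.inv_def, Matrix.smul_apply, Matrix.adjugate_apply,
    det_updateRow_single_last, one_mul, smul_eq_mul, Ring.inverse_eq_inv', inv_mul_eq_div]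

lemma star_of_pos {z : ℂ} (hz : 0 < z) : star z = z := by
  rw [Complex.lt_def] at hz
  exact Complex.conj_eq_iff_im.2 hz.2.symm

/-- Subtracting `det A / det A'` from the lower-right corner of a positive definite matrix
leaves a positive semidefinite matrix. -/
lemma corner_posSemidef {n : ℕ} {A : Matrix (Fin (n+2)) (Fin (n+2)) ℂ} (hA : A.PosDef) :
    (A - Matrix.single (Fin.last (n+1)) (Fin.last (n+1))
        (A.det / (A.submatrix Fin.castSucc Fin.castSucc).det)).PosSemidef := by
  set l : Fin (n+2) := Fin.last (n+1) with hl
  set α : ℂ := A.det / (A.submatrix Fin.castSucc Fin.castSucc).det with hα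
  have hdet : A.det ≠ 0 := hA.det_pos.ne'
  have hmul : A * A⁻¹ = 1 := Matrix.mul_nonsing_inv A (Ne.isUnit hdet)
  set v : Fin (n+2) → ℂ := A⁻¹ *ᵥ Pi.single l 1 with hv
  have hAv : A *ᵥ v = Pi.single l 1 := by
    rw [hv, Matrix.mulVec_mulVec, hmul, Matrix.one_mulVec]
  have hstar_single : star ((Pi.single l 1 : Fin (n+2) → ℂ)) = Pi.single l 1 := by
    ext i; by_cases h : i = l <;> simp [h, Pi.single_apply]
  have hvl : v l = A⁻¹ l l := by
    rw [hv]
    simp [Matrix.mulVec_single]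
  have hvlpos : 0 < v l := by
    have h1 := hA.inv.dotProduct_mulVec_pos (x := Pi.single l 1) (by
      intro h
      have := congrFun h l
      simp at this)
    rw [hstar_single] at h1
    rwa [show Pi.single l (1:ℂ) ⬝ᵥ (A⁻¹ *ᵥ Pi.single l 1) = v l by
      rw [← hv, single_dotProduct, one_mul]] at h1
  have hvlne : v l ≠ 0 := hvlpos.ne'
  clear_value v
  have hvlstar : star (v l) = v l := star_of_pos hvlpos
  have hαv : α = (v l)⁻¹ := by
    rw [hvl, inv_last_last hdet, hα, inv_div]
  have hαreal : star α = α := by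
    rw [hαv, star_inv₀, hvlstar]
  have hαvl : α * v l = 1 := by rw [hαv, inv_mul_cancel₀ hvlne]
  refine Matrix.PosSemidef.of_dotProduct_mulVec_nonneg ?_ ?_
  · refine Matrix.IsHermitian.sub hA.1 ?_
    ext i j
    simp only [Matrix.conjTranspose_apply, Matrix.single, Matrix.of_apply]
    by_cases h1 : l = i
    · by_cases h2 : l = j
      · rw [← h1, ← h2]; simp [hαreal]
      · simp [h2]
    · simp [h1]
  · intro x
    set c : ℂ := x l * α with hc
    set u : Fin (n+2) → ℂ := x - c • v with hu
    have e1 : A *ᵥ u = A *ᵥ x - c • (Pi.single l 1 : Fin (n+2) → ℂ) := by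
      rw [hu, Matrix.mulVec_sub, Matrix.mulVec_smul, hAv]
    have e2 : star u = star x - star c • star v := by
      rw [hu, star_sub, star_smul]
    have hvAx : star v ⬝ᵥ (A *ᵥ x) = x l := by
      rw [Matrix.dotProduct_mulVec, show star v ᵥ* A = star (A *ᵥ v) by
        rw [Matrix.star_mulVec, hA.1.eq], hAv, hstar_single,
        single_dotProduct, one_mul]
    have hxs : star x ⬝ᵥ (Pi.single l 1 : Fin (n+2) → ℂ) = star (x l) := by
      rw [dotProduct_single, mul_one]; rfl
    have hvs : star v ⬝ᵥ (Pi.single l 1 : Fin (n+2) → ℂ) = v l := by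
      rw [dotProduct_single, mul_one]; exact hvlstar
    have key : star u ⬝ᵥ (A *ᵥ u) = star x ⬝ᵥ (A *ᵥ x) - star (x l) * (α * x l) := by
      rw [e1, e2, sub_dotProduct, dotProduct_sub, dotProduct_sub,
        smul_dotProduct, smul_dotProduct, dotProduct_smul,
        dotProduct_smul, hvAx, hxs, hvs]
      have hstarc : star c = star (x l) * α := by rw [hc, star_mul', hαreal]
      rw [hstarc, hc]
      have : (star (x l) * α) • ((x l * α) • v l) = star (x l) * x l * α * (α * v l) := by
        simp [smul_eq_mul]; ring
      rw [this, hαvl, mul_one]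
      simp only [smul_eq_mul]
      ring
    have h0 := hA.posSemidef.dotProduct_mulVec_nonneg u
    rw [key] at h0
    have hS : star x ⬝ᵥ ((A - Matrix.single l l α) *ᵥ x)
        = star x ⬝ᵥ (A *ᵥ x) - star (x l) * (α * x l) := by
      rw [Matrix.sub_mulVec, dotProduct_sub, Matrix.single_mulVec]
      congr 1
      rw [show Function.update (0 : Fin (n+2) → ℂ) l (α * x l) = Pi.single l (α * x l) from rfl,
        dotProduct_single]
      simp only [Pi.star_apply]
      try ring
    rw [hS]
    exact h0

end Aux

/-- For `N ≥ 2` and positive definite `A, B ∈ ℂ^{N×N}`, setting `C = A ⋄ B`: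
`det C_{N-1} ≥ (a₀₀ det B_{N-1}/det B_{N-2} + b₀₀ det A_{N-1}/det A_{N-2}) det C_{N-2}`. -/
theorem jury_det_step {N : ℕ} (hN : 2 ≤ N) (A B : Matrix (Fin N) (Fin N) ℂ)
    (hA : A.PosDef) (hB : B.PosDef) :
    (A ⟨0, by omega⟩ ⟨0, by omega⟩ * (leadDet B (N - 1) / leadDet B (N - 2))
        + B ⟨0, by omega⟩ ⟨0, by omega⟩ * (leadDet A (N - 1) / leadDet A (N - 2)))
        * leadDet (jury A B) (N - 2)
      ≤ leadDet (jury A B) (N - 1) := by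
  obtain ⟨n, rfl⟩ : ∃ n, N = n + 2 := ⟨N - 2, by omega⟩
  have e_full : ∀ M : Matrix (Fin (n+2)) (Fin (n+2)) ℂ, leadDet M (n+2-1) = M.det := by
    intro M
    rw [leadDet, dif_pos (by omega : n+2-1 < n+2)]
    congr 1
  have e_sub : ∀ M : Matrix (Fin (n+2)) (Fin (n+2)) ℂ,
      leadDet M (n+2-2) = (M.submatrix Fin.castSucc Fin.castSucc).det := by
    intro M
    rw [leadDet, dif_pos (by omega : n+2-2 < n+2)]
    congr 1
  have h00 : (⟨0, by omega⟩ : Fin (n+2)) = 0 := by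
    apply Fin.ext
    simp
  rw [e_full, e_full, e_full, e_sub, e_sub, e_sub, h00]
  set l : Fin (n+2) := Fin.last (n+1) with hl
  set α : ℂ := A.det / (A.submatrix Fin.castSucc Fin.castSucc).det with hα
  set β : ℂ := B.det / (B.submatrix Fin.castSucc Fin.castSucc).det with hβ
  set A0 : Matrix (Fin (n+2)) (Fin (n+2)) ℂ := A - Matrix.single l l α with hA0
  set B0 : Matrix (Fin (n+2)) (Fin (n+2)) ℂ := B - Matrix.single l l β with hB0
  have hA0psd : A0.PosSemidef := corner_posSemidef hA
  have hB0psd : B0.PosSemidef := corner_posSemidef hB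
  have hl0 : l ≠ (0 : Fin (n+2)) := by
    intro h
    have := congrArg Fin.val h
    simp [hl] at this
  have hA00 : A0 0 0 = A 0 0 := by
    rw [hA0]
    simp [Matrix.sub_apply, Matrix.single, hl0]
  have hB00 : B0 0 0 = B 0 0 := by
    rw [hB0]
    simp [Matrix.sub_apply, Matrix.single, hl0]
  set lam : ℂ := α * B 0 0 + β * A 0 0 with hlam
  -- decomposition of the Jury product
  have hAr : A = A0 + Matrix.single l l α := by rw [hA0]; rw [sub_add_cancel]
  have hBr : B = B0 + Matrix.single l l β := by rw [hB0]; rw [sub_add_cancel]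
  have hdecomp : jury A B = jury A0 B0 + Matrix.single l l lam := by
    calc jury A B = jury (A0 + Matrix.single l l α) (B0 + Matrix.single l l β) := by
          rw [← hAr, ← hBr]
      _ = jury A0 B0 + jury A0 (Matrix.single l l β)
            + (jury (Matrix.single l l α) B0
              + jury (Matrix.single l l α) (Matrix.single l l β)) := by
          rw [jury_add_left, jury_add_right, jury_add_right]
      _ = jury A0 B0 + Matrix.single l l lam := by
          rw [jury_comm A0 (Matrix.single l l β), hl, jury_single, jury_single,
            jury_single]
          rw [← hl, hA00, hB00]
          rw [show Matrix.single l l (α * Matrix.single l l β 0 0)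
              = 0 by
            rw [show Matrix.single l l β 0 0 = 0 by
              simp [Matrix.single, hl0], mul_zero, Matrix.single_zero]]
          rw [hlam, Matrix.single_add]
          abel
  set D : Matrix (Fin (n+2)) (Fin (n+2)) ℂ := jury A0 B0 with hD
  have hDpsd : D.PosSemidef := jury_posSemidef hA0psd hB0psd
  -- determinant expansion
  have hsubeq : D.submatrix Fin.castSucc Fin.castSucc
      = (jury A B).submatrix Fin.castSucc Fin.castSucc := by
    ext i j
    rw [hdecomp]
    simp [Matrix.single, hl, (Fin.castSucc_lt_last i).ne' ]
  have hupdate : jury A B = D.updateRow l (fun j => D l j + (Pi.single l lam : Fin (n+2) → ℂ) j) := by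
    rw [hdecomp]
    ext i j
    rcases eq_or_ne i l with rfl | h
    · simp [Matrix.updateRow_self, Matrix.single, Pi.single_apply, eq_comm]
    · simp only [Matrix.add_apply, Matrix.updateRow_ne h, Matrix.single, Matrix.of_apply]
      rw [if_neg (fun hh => h hh.1.symm), add_zero]
  have hdet : (jury A B).det
      = D.det + lam * (D.submatrix Fin.castSucc Fin.castSucc).det := by
    conv_lhs => rw [hupdate]
    rw [show (fun j => D l j + (Pi.single l lam : Fin (n+2) → ℂ) j) = D l + Pi.single l lam from rfl,
      Matrix.det_updateRow_add, Matrix.updateRow_eq_self, det_updateRow_single_last]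
  rw [hsubeq] at hdet
  rw [hdet]
  have hcoef : A 0 0 * β + B 0 0 * α = lam := by rw [hlam]; ring
  rw [hcoef]
  exact le_add_of_nonneg_left (posSemidef_det_nonneg hDpsd)
end

section
/- Let N ≥ 2 and let ⋆ be a causal product determined by data (T_n, σ_n), n = 0,…,N−1. Then for all positive definite N×N complex matrices A = (a_{jk}) and B = (b_{jk}): det((A ⋆ B)_{N−1}) ≥ ( (det A_{N−1} / det A_{N−2}) · b_{σ_{N−1}(N−1),σ_{N−1}(N−1)} + (det B_{N−1} / det B_{N−2}) · a_{σ_{N−1}^{-1}(N−1),σ_{N−1}^{-1}(N−1)} − (det A_{N−1} / det A_{N−2}) · (det B_{N−1} / det B_{N−2}) · 𝟙[σ_{N−1}(N−1) = N−1] ) · det((A ⋆ B)_{N−2}), where M_n denotes the leading principal (n+1)×(n+1) submatrix of a matrix M and 𝟙[·] is 1 if the condition holds and 0 otherwise. -/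
open Finset Matrix ComplexOrder

/-- The causal product determined by data `(T_n, σ_n)`: for `N × N` complex matrices,
`(A ⋆ B)_{jk} = ∑_{(p,q) ∈ T_j × T_k} a_{p,q} b_{σ_j(p), σ_k(q)}`. -/
noncomputable def causal {N : ℕ} (T : Fin N → Finset (Fin N))
    (σ : ∀ n, Equiv.Perm {x // x ∈ T n}) (A B : Matrix (Fin N) (Fin N) ℂ) :
    Matrix (Fin N) (Fin N) ℂ :=
  Matrix.of fun j k =>
    ∑ p ∈ (T j).attach, ∑ q ∈ (T k).attach, A p.1 q.1 * B (σ j p).1 (σ k q).1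

lemma leadDet_top {n : ℕ} (A : Matrix (Fin (n+2)) (Fin (n+2)) ℂ) : leadDet A (n+1) = A.det := by
  rw [leadDet, dif_pos (by omega : n+1 < n+2)]
  have h : (Fin.castLE (by omega : n+1+1 ≤ n+2)) = (id : Fin (n+2) → Fin (n+2)) :=
    funext fun x => Fin.ext rfl
  rw [h, Matrix.submatrix_id_id]

lemma leadDet_pred {n : ℕ} (A : Matrix (Fin (n+2)) (Fin (n+2)) ℂ) :
    leadDet A n = (A.submatrix Fin.castSucc Fin.castSucc).det := by
  rw [leadDet, dif_pos (by omega : n < n+2)]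
  have h : (Fin.castLE (by omega : n+1 ≤ n+2)) = (Fin.castSucc : Fin (n+1) → Fin (n+2)) :=
    funext fun x => Fin.ext rfl
  rw [h]

private lemma quad_comm {α β γ δ : Type*} (s : Finset α) (t : Finset β) (u : Finset γ)
    (v : Finset δ) (f : α → β → γ → δ → ℂ) :
    ∑ a ∈ s, ∑ b ∈ t, ∑ c ∈ u, ∑ d ∈ v, f a b c d
      = ∑ c ∈ u, ∑ d ∈ v, ∑ a ∈ s, ∑ b ∈ t, f a b c d := by
  calc ∑ a ∈ s, ∑ b ∈ t, ∑ c ∈ u, ∑ d ∈ v, f a b c d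
      = ∑ a ∈ s, ∑ c ∈ u, ∑ b ∈ t, ∑ d ∈ v, f a b c d :=
        Finset.sum_congr rfl fun a _ => Finset.sum_comm
    _ = ∑ c ∈ u, ∑ a ∈ s, ∑ b ∈ t, ∑ d ∈ v, f a b c d := Finset.sum_comm
    _ = ∑ c ∈ u, ∑ a ∈ s, ∑ d ∈ v, ∑ b ∈ t, f a b c d :=
        Finset.sum_congr rfl fun c _ => Finset.sum_congr rfl fun a _ => Finset.sum_comm
    _ = ∑ c ∈ u, ∑ d ∈ v, ∑ a ∈ s, ∑ b ∈ t, f a b c d :=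
        Finset.sum_congr rfl fun c _ => Finset.sum_comm

/-- Gram factorization: a causal product of PSD matrices is PSD. -/
lemma causal_posSemidef {N : ℕ} (T : Fin N → Finset (Fin N))
    (σ : ∀ n, Equiv.Perm {x // x ∈ T n}) {A B : Matrix (Fin N) (Fin N) ℂ}
    (hA : A.PosSemidef) (hB : B.PosSemidef) : (causal T σ A B).PosSemidef := by
  obtain ⟨M, rfl⟩ : ∃ M : Matrix (Fin N) (Fin N) ℂ, A = Mᴴ * M := by
    open MatrixOrder in exact CStarAlgebra.nonneg_iff_eq_star_mul_self.mp hA.nonneg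
  obtain ⟨P, rfl⟩ : ∃ P : Matrix (Fin N) (Fin N) ℂ, B = Pᴴ * P := by
    open MatrixOrder in exact CStarAlgebra.nonneg_iff_eq_star_mul_self.mp hB.nonneg
  have key : causal T σ (Mᴴ * M) (Pᴴ * P) =
      (Matrix.of fun (rs : Fin N × Fin N) k =>
        ∑ q ∈ (T k).attach, M rs.1 q.1 * P rs.2 (σ k q).1)ᴴ *
      (Matrix.of fun (rs : Fin N × Fin N) k =>
        ∑ q ∈ (T k).attach, M rs.1 q.1 * P rs.2 (σ k q).1) := by
    ext j k
    simp only [causal, Matrix.of_apply, Matrix.mul_apply, Matrix.conjTranspose_apply]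
    rw [show (Finset.univ : Finset (Fin N × Fin N)) = Finset.univ ×ˢ Finset.univ by simp,
      Finset.sum_product]
    simp only [star_sum, star_mul', Finset.sum_mul_sum]
    rw [quad_comm]
    refine Finset.sum_congr rfl fun r _ => Finset.sum_congr rfl fun s _ =>
      Finset.sum_congr rfl fun p _ => Finset.sum_congr rfl fun q _ => ?_
    ring
  rw [key]
  exact Matrix.posSemidef_conjTranspose_mul_self _


noncomputable def Elast (n : ℕ) : Matrix (Fin (n+2)) (Fin (n+2)) ℂ :=
  Matrix.of fun a b => if a = Fin.last (n+1) ∧ b = Fin.last (n+1) then 1 else 0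

lemma det_updateRow_single {n : ℕ} (D : Matrix (Fin (n+1)) (Fin (n+1)) ℂ) :
    (D.updateRow (Fin.last n) (Pi.single (Fin.last n) 1)).det
      = (D.submatrix Fin.castSucc Fin.castSucc).det := by
  cases n with
  | zero => simp [Matrix.det_fin_one, Matrix.det_fin_zero, Pi.single_apply]
  | succ n =>
    rw [Matrix.det_succ_row _ (Fin.last (n+1))]
    rw [Finset.sum_eq_single (Fin.last (n+1))]
    · simp only [Matrix.updateRow_self, Pi.single_eq_same, Fin.succAbove_last, Fin.val_last]
      rw [show ((-1 : ℂ)) ^ ((n+1) + (n+1)) = 1 by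
        exact Even.neg_one_pow ⟨n+1, rfl⟩]
      rw [one_mul, one_mul]
      congr 1
      ext i j
      simp [Matrix.updateRow_apply, (Fin.castSucc_lt_last i).ne]
    · intro b _ hb
      simp [Matrix.updateRow_self, Pi.single_apply, hb]
    · intro h; exact absurd (Finset.mem_univ _) h

lemma det_add_Elast {n : ℕ} (D : Matrix (Fin (n+2)) (Fin (n+2)) ℂ) (c : ℂ) :
    (D + c • Elast n).det = D.det + c * (D.submatrix Fin.castSucc Fin.castSucc).det := by
  have hupd : D + c • Elast n
      = D.updateRow (Fin.last (n+1)) (D (Fin.last (n+1)) + c • (Pi.single (Fin.last (n+1)) 1 : Fin (n+2) → ℂ)) := by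
    ext i j
    rcases eq_or_ne i (Fin.last (n+1)) with rfl | hi
    · simp [Elast, Matrix.updateRow_self, Pi.single_apply, eq_comm, and_comm]
    · simp [Elast, Matrix.updateRow_apply, hi]
  rw [hupd, Matrix.det_updateRow_add, Matrix.updateRow_eq_self, Matrix.det_updateRow_smul,
    det_updateRow_single]



lemma posDef_submatrix_equiv {m n : Type*} [Fintype m] [Fintype n] [DecidableEq m]
    [DecidableEq n] {M : Matrix n n ℂ} (hM : M.PosDef) (e : m ≃ n) :
    (M.submatrix e e).PosDef := by
  exact hM.submatrix e.injective

lemma posDef_of_fromBlocks₁₁ {m n : Type*} [Fintype m] [Fintype n] [DecidableEq m]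
    [DecidableEq n] {A : Matrix m m ℂ} {B : Matrix m n ℂ} {C : Matrix n m ℂ}
    {D : Matrix n n ℂ} (h : (Matrix.fromBlocks A B C D).PosDef) : A.PosDef := by
  constructor
  · ext i j
    have := congrFun (congrFun h.1 (Sum.inl i)) (Sum.inl j)
    simpa [Matrix.conjTranspose_apply, Matrix.fromBlocks] using this
  · exact (h.submatrix Sum.inl_injective).2

lemma posSemidef_sub_det_ratio {n : ℕ} {A : Matrix (Fin (n+2)) (Fin (n+2)) ℂ} (hA : A.PosDef) :
    (A - (A.det / (A.submatrix Fin.castSucc Fin.castSucc).det) • Elast n).PosSemidef := by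
  set e : Fin (n+1) ⊕ Fin 1 ≃ Fin (n+2) := finSumFinEquiv with he
  set M : Matrix (Fin (n+1) ⊕ Fin 1) (Fin (n+1) ⊕ Fin 1) ℂ := A.submatrix e e with hM
  have hMpd : M.PosDef := posDef_submatrix_equiv hA e
  set A₀ := M.toBlocks₁₁ with hA₀def
  set B₀ := M.toBlocks₁₂ with hB₀def
  set C₀ := M.toBlocks₂₁ with hC₀def
  set D₀ := M.toBlocks₂₂ with hD₀def
  have hblocks : M = Matrix.fromBlocks A₀ B₀ C₀ D₀ := (Matrix.fromBlocks_toBlocks M).symm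
  have hA₀ : A₀.PosDef := posDef_of_fromBlocks₁₁ (hblocks ▸ hMpd)
  have hC₀ : C₀ = B₀ᴴ := by
    ext i j
    have h := congrFun (congrFun hMpd.1 (Sum.inr i)) (Sum.inl j)
    simpa [hC₀def, hB₀def, Matrix.toBlocks₂₁, Matrix.toBlocks₁₂,
      Matrix.conjTranspose_apply] using h.symm
  haveI : Invertible A₀ := A₀.invertibleOfIsUnitDet (isUnit_iff_ne_zero.mpr hA₀.det_pos.ne')
  set S : Matrix (Fin 1) (Fin 1) ℂ := D₀ - B₀ᴴ * A₀⁻¹ * B₀ with hS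
  have hdet : A.det = A₀.det * S 0 0 := by
    rw [← Matrix.det_submatrix_equiv_self e A, ← hM, hblocks, Matrix.det_fromBlocks₁₁,
      Matrix.invOf_eq_nonsing_inv, hC₀, ← hS, Matrix.det_fin_one]
  have hlast : e (Sum.inr 0) = Fin.last (n+1) := by
    rw [he]; exact Fin.ext (by simp)
  have hsub : A.submatrix (Fin.castSucc : Fin (n+1) → Fin (n+2)) Fin.castSucc = A₀ := by
    ext i j
    simp only [hA₀def, Matrix.toBlocks₁₁, hM, Matrix.of_apply, Matrix.submatrix_apply, he,
      finSumFinEquiv_apply_left]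
    rfl
  have hα : A.det / (A.submatrix Fin.castSucc Fin.castSucc).det = S 0 0 := by
    rw [hsub, hdet, mul_comm, mul_div_assoc, div_self hA₀.det_pos.ne', mul_one]
  rw [hα, ← Matrix.posSemidef_submatrix_equiv e]
  have hne : ∀ i : Fin (n+1), e (Sum.inl i) ≠ Fin.last (n+1) := by
    intro i
    rw [he, finSumFinEquiv_apply_left]
    exact (Fin.castSucc_lt_last i).ne
  have hkey : (A - S 0 0 • Elast n).submatrix e e
      = Matrix.fromBlocks A₀ B₀ B₀ᴴ (D₀ - S 0 0 • 1) := by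
    rw [← hC₀]
    ext i j
    rcases i with i | i <;> rcases j with j | j
    · simp [Elast, hA₀def, Matrix.toBlocks₁₁, hM, hne i]
    · simp [Elast, hB₀def, Matrix.toBlocks₁₂, hM, hne i]
    · simp [Elast, hC₀def, Matrix.toBlocks₂₁, hM, hne j]
    · have hi : i = 0 := Subsingleton.elim _ _
      have hj : j = 0 := Subsingleton.elim _ _
      subst hi hj
      simp [Elast, hD₀def, Matrix.toBlocks₂₂, hM, hlast, Matrix.one_apply]
  rw [hkey, Matrix.PosDef.fromBlocks₁₁ B₀ _ hA₀]
  have hzero : (D₀ - S 0 0 • 1) - B₀ᴴ * A₀⁻¹ * B₀ = 0 := by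
    have h2 : (D₀ - S 0 0 • 1) - B₀ᴴ * A₀⁻¹ * B₀ = S - S 0 0 • 1 := by
      rw [hS]; abel
    rw [h2]
    ext i j
    fin_cases i; fin_cases j
    simp [Matrix.one_apply]
  rw [hzero]
  exact ⟨by simp [Matrix.IsHermitian], fun x => by simp⟩

private lemma hsum_pt {n : ℕ} (s : Finset (Fin n)) (F : {x // x ∈ s} → {x // x ∈ s} → ℂ)
    (a b : {x // x ∈ s}) :
    ∑ p ∈ s.attach, ∑ q ∈ s.attach, (if p = a ∧ q = b then F p q else 0) = F a b := by
  have h1 : ∀ p, ∑ q ∈ s.attach, (if p = a ∧ q = b then F p q else 0)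
      = if p = a then F p b else 0 := by
    intro p
    by_cases hp : p = a
    · simp [hp, Finset.sum_ite_eq', Finset.mem_attach]
    · simp [hp]
  simp only [h1]
  simp [Finset.sum_ite_eq', Finset.mem_attach]

lemma causal_entry_decomp {n : ℕ} (T : Fin (n+2) → Finset (Fin (n+2)))
    (hT : ∀ j, T j ⊆ Finset.Iic j) (hmem : ∀ j, j ∈ T j)
    (σ : ∀ j, Equiv.Perm {x // x ∈ T j}) (A B : Matrix (Fin (n+2)) (Fin (n+2)) ℂ)
    (α β : ℂ) (j k : Fin (n+2)) :
    causal T σ A B j k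
      = causal T σ (A - α • Elast n) (B - β • Elast n) j k
        + (if j = Fin.last (n+1) ∧ k = Fin.last (n+1) then
            (α * B (σ (Fin.last (n+1)) ⟨Fin.last (n+1), hmem _⟩).1
                   (σ (Fin.last (n+1)) ⟨Fin.last (n+1), hmem _⟩).1
             + β * A ((σ (Fin.last (n+1))).symm ⟨Fin.last (n+1), hmem _⟩).1
                    ((σ (Fin.last (n+1))).symm ⟨Fin.last (n+1), hmem _⟩).1
             - α * β * (if (σ (Fin.last (n+1)) ⟨Fin.last (n+1), hmem _⟩).1 = Fin.last (n+1)
                 then 1 else 0))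
          else 0) := by
  set m : Fin (n+2) := Fin.last (n+1) with hm
  rw [← sub_eq_iff_eq_add']
  simp only [causal, Matrix.of_apply]
  rw [← Finset.sum_sub_distrib]
  simp only [← Finset.sum_sub_distrib]
  have summand : ∀ (p : {x // x ∈ T j}) (q : {x // x ∈ T k}),
      A p.1 q.1 * B (σ j p).1 (σ k q).1
        - (A - α • Elast n) p.1 q.1 * (B - β • Elast n) (σ j p).1 (σ k q).1
      = α * ((if p.1 = m ∧ q.1 = m then 1 else 0) * B (σ j p).1 (σ k q).1)
        + β * ((if (σ j p).1 = m ∧ (σ k q).1 = m then 1 else 0) * A p.1 q.1)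
        - α * β * ((if p.1 = m ∧ q.1 = m then 1 else 0)
            * (if (σ j p).1 = m ∧ (σ k q).1 = m then 1 else 0)) := by
    intro p q
    simp only [Matrix.sub_apply, Matrix.smul_apply, Elast, Matrix.of_apply, smul_eq_mul]
    ring
  simp only [summand]
  by_cases hj : j = m
  · by_cases hk : k = m
    · subst hj; subst hk
      rw [if_pos ⟨rfl, rfl⟩]
      set e₀ : {x // x ∈ T m} := ⟨m, hmem m⟩ with he₀
      set t₀ : {x // x ∈ T m} := (σ m).symm e₀ with ht₀
      have hcond1 : ∀ p : {x // x ∈ T m}, (p.1 = m) ↔ (p = e₀) := fun p => by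
        rw [Subtype.ext_iff]
      simp only [hcond1]
      have hcond2 : ∀ p : {x // x ∈ T m}, ((σ m) p = e₀) ↔ (p = t₀) := fun p => by
        rw [ht₀]; exact Equiv.apply_eq_iff_eq_symm_apply _
      simp only [hcond2]
      simp only [Finset.sum_add_distrib, Finset.sum_sub_distrib]
      have E1 : ∑ p ∈ (T m).attach, ∑ q ∈ (T m).attach,
          α * ((if p = e₀ ∧ q = e₀ then (1:ℂ) else 0) * B (σ m p).1 (σ m q).1)
          = α * B (σ m e₀).1 (σ m e₀).1 := by
        rw [← hsum_pt (T m) (fun p q => α * B (σ m p).1 (σ m q).1) e₀ e₀]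
        refine Finset.sum_congr rfl fun p _ => Finset.sum_congr rfl fun q _ => ?_
        by_cases h : p = e₀ ∧ q = e₀ <;> simp [h]
      have E2 : ∑ p ∈ (T m).attach, ∑ q ∈ (T m).attach,
          β * ((if p = t₀ ∧ q = t₀ then (1:ℂ) else 0) * A p.1 q.1)
          = β * A t₀.1 t₀.1 := by
        rw [← hsum_pt (T m) (fun p q => β * A p.1 q.1) t₀ t₀]
        refine Finset.sum_congr rfl fun p _ => Finset.sum_congr rfl fun q _ => ?_
        by_cases h : p = t₀ ∧ q = t₀ <;> simp [h]
      have E3 : ∑ p ∈ (T m).attach, ∑ q ∈ (T m).attach,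
          α * β * ((if p = e₀ ∧ q = e₀ then (1:ℂ) else 0)
            * (if p = t₀ ∧ q = t₀ then (1:ℂ) else 0))
          = α * β * (if e₀ = t₀ then 1 else 0) := by
        have E3' : ∑ p ∈ (T m).attach, ∑ q ∈ (T m).attach,
            α * β * ((if p = e₀ ∧ q = e₀ then (1:ℂ) else 0)
              * (if p = t₀ ∧ q = t₀ then (1:ℂ) else 0))
            = ∑ p ∈ (T m).attach, ∑ q ∈ (T m).attach,
              (if p = e₀ ∧ q = e₀ then
                α * β * (if p = t₀ ∧ q = t₀ then (1:ℂ) else 0) else 0) := by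
          refine Finset.sum_congr rfl fun p _ => Finset.sum_congr rfl fun q _ => ?_
          by_cases h : p = e₀ ∧ q = e₀ <;> simp [h]
        rw [E3', hsum_pt]
        by_cases h : e₀ = t₀ <;> simp [h]
      rw [E1, E2, E3]
    · rw [if_neg (fun h => hk h.2)]
      refine Finset.sum_eq_zero fun p _ => Finset.sum_eq_zero fun q _ => ?_
      have h1 : q.1 ≠ m := fun h => hk (le_antisymm (Fin.le_last k) (h ▸ Finset.mem_Iic.mp (hT k q.2)))
      have h2 : (σ k q).1 ≠ m := fun h => hk (le_antisymm (Fin.le_last k) (h ▸ Finset.mem_Iic.mp (hT k (σ k q).2)))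
      rw [if_neg (fun h => h1 h.2), if_neg (fun h => h2 h.2)]
      ring
  · rw [if_neg (fun h => hj h.1)]
    refine Finset.sum_eq_zero fun p _ => Finset.sum_eq_zero fun q _ => ?_
    have h1 : p.1 ≠ m := fun h => hj (le_antisymm (Fin.le_last j) (h ▸ Finset.mem_Iic.mp (hT j p.2)))
    have h2 : (σ j p).1 ≠ m := fun h => hj (le_antisymm (Fin.le_last j) (h ▸ Finset.mem_Iic.mp (hT j (σ j p).2)))
    rw [if_neg (fun h => h1 h.1), if_neg (fun h => h2 h.1)]
    ring


lemma posSemidef_det_nonneg_s13 {k : Type*} [Fintype k] [DecidableEq k] {M : Matrix k k ℂ}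
    (hM : M.PosSemidef) : 0 ≤ M.det := by
  rw [hM.isHermitian.det_eq_prod_eigenvalues, ← RCLike.ofReal_prod]
  exact RCLike.ofReal_nonneg.mpr (Finset.prod_nonneg fun i _ => hM.eigenvalues_nonneg i)

/-- For `N ≥ 2`, positive definite `A, B ∈ ℂ^{N×N}` and any causal product `⋆`,
writing `C = A ⋆ B` and `m = N-1`:
`det C_{N-1} ≥ ((det A_{N-1}/det A_{N-2}) b_{σ_m(m),σ_m(m)}
  + (det B_{N-1}/det B_{N-2}) a_{σ_m⁻¹(m),σ_m⁻¹(m)}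
  - (det A_{N-1}/det A_{N-2})(det B_{N-1}/det B_{N-2}) 𝟙[σ_m(m) = m]) · det C_{N-2}`. -/
theorem causal_det_step {N : ℕ} (hN : 2 ≤ N) (T : Fin N → Finset (Fin N))
    (hT : ∀ n, T n ⊆ Finset.Iic n) (hmem : ∀ n, n ∈ T n)
    (σ : ∀ n, Equiv.Perm {x // x ∈ T n})
    (A B : Matrix (Fin N) (Fin N) ℂ) (hA : A.PosDef) (hB : B.PosDef) :
    ((leadDet A (N - 1) / leadDet A (N - 2))
          * B (σ ⟨N - 1, by omega⟩ ⟨⟨N - 1, by omega⟩, hmem ⟨N - 1, by omega⟩⟩).1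
              (σ ⟨N - 1, by omega⟩ ⟨⟨N - 1, by omega⟩, hmem ⟨N - 1, by omega⟩⟩).1
        + (leadDet B (N - 1) / leadDet B (N - 2))
          * A ((σ ⟨N - 1, by omega⟩).symm ⟨⟨N - 1, by omega⟩, hmem ⟨N - 1, by omega⟩⟩).1
              ((σ ⟨N - 1, by omega⟩).symm ⟨⟨N - 1, by omega⟩, hmem ⟨N - 1, by omega⟩⟩).1
        - (leadDet A (N - 1) / leadDet A (N - 2)) * (leadDet B (N - 1) / leadDet B (N - 2))
          * (if (σ ⟨N - 1, by omega⟩ ⟨⟨N - 1, by omega⟩, hmem ⟨N - 1, by omega⟩⟩).1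
                = (⟨N - 1, by omega⟩ : Fin N) then 1 else 0))
        * leadDet (causal T σ A B) (N - 2)
      ≤ leadDet (causal T σ A B) (N - 1) := by
  obtain ⟨n, rfl⟩ : ∃ n, N = n + 2 := ⟨N - 2, by omega⟩
  simp only [show n + 2 - 1 = n + 1 from rfl, show n + 2 - 2 = n from rfl]
  have hmk : (⟨n + 1, by omega⟩ : Fin (n+2)) = Fin.last (n+1) := rfl
  simp only [hmk]
  rw [leadDet_top A, leadDet_pred A, leadDet_top B, leadDet_pred B,
      leadDet_top (causal T σ A B), leadDet_pred (causal T σ A B)]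
  set α := A.det / (A.submatrix Fin.castSucc Fin.castSucc).det with hα
  set β := B.det / (B.submatrix Fin.castSucc Fin.castSucc).det with hβ
  have hdec := causal_entry_decomp T hT hmem σ A B α β
  have hPSD : (causal T σ (A - α • Elast n) (B - β • Elast n)).PosSemidef := by
    rw [hα, hβ]
    exact causal_posSemidef T σ (posSemidef_sub_det_ratio hA) (posSemidef_sub_det_ratio hB)
  set c : ℂ := α * B (σ (Fin.last (n+1)) ⟨Fin.last (n+1), hmem _⟩).1
                   (σ (Fin.last (n+1)) ⟨Fin.last (n+1), hmem _⟩).1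
             + β * A ((σ (Fin.last (n+1))).symm ⟨Fin.last (n+1), hmem _⟩).1
                    ((σ (Fin.last (n+1))).symm ⟨Fin.last (n+1), hmem _⟩).1
             - α * β * (if (σ (Fin.last (n+1)) ⟨Fin.last (n+1), hmem _⟩).1 = Fin.last (n+1)
                 then 1 else 0) with hc
  have hCeq : causal T σ A B
      = causal T σ (A - α • Elast n) (B - β • Elast n) + c • Elast n := by
    ext j k
    rw [Matrix.add_apply, hdec j k]
    congr 1
    by_cases h : j = Fin.last (n+1) ∧ k = Fin.last (n+1)
    · rw [if_pos h, hc, Matrix.smul_apply, Elast, Matrix.of_apply, if_pos h, smul_eq_mul, mul_one]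
    · rw [if_neg h, Matrix.smul_apply, Elast, Matrix.of_apply, if_neg h, smul_eq_mul, mul_zero]
  have hdet : (causal T σ A B).det
      = (causal T σ (A - α • Elast n) (B - β • Elast n)).det
        + c * ((causal T σ (A - α • Elast n) (B - β • Elast n)).submatrix
            Fin.castSucc Fin.castSucc).det := by
    rw [hCeq, det_add_Elast]
  have hminor : (causal T σ A B).submatrix Fin.castSucc Fin.castSucc
      = (causal T σ (A - α • Elast n) (B - β • Elast n)).submatrix
          Fin.castSucc Fin.castSucc := by
    ext i j
    rw [Matrix.submatrix_apply, Matrix.submatrix_apply, hdec, if_neg, add_zero]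
    exact fun h => (Fin.castSucc_lt_last i).ne h.1
  rw [hminor, hdet]
  exact le_add_of_nonneg_left (posSemidef_det_nonneg_s13 hPSD)
end
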